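/- Under the standing assumptions (complete doubling uniformly perfect (X,d), net system with parameters (c*, C*, r), r ∈ (0,r₀], map π satisfying (T1)–(T5) with (r₀/(1−r₀))·α₁ < min(α₂, α₃ − C*)), let α₅ = α₂ − α₁r₀/(1−r₀). Then for every (k,n) ∈ Ω, the open ball B(x_{k,n}, α₅ r^k) is contained in K_{k,n}. -/
import Mathlib


open Metric Set

/-- A metric space is *doubling* if there is `N` such that every ball of radius `2R`
is covered by `N` balls of radius `R`. -/
def Doubling (X : Type*) [PseudoMetricSpace X] : Prop :=
  ∃ N : ℕ, ∀ (x : X) (R : ℝ), ∃ c : Fin N → X,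
    ball x (2 * R) ⊆ ⋃ i, ball (c i) R

/-- A metric space is *uniformly perfect* if there is `γ > 1` such that
`B(x,γR) \ B(x,R) ≠ ∅` whenever `B(x,R) ≠ X`. -/
def UniformlyPerfect (X : Type*) [PseudoMetricSpace X] : Prop :=
  ∃ γ : ℝ, 1 < γ ∧ ∀ (x : X) (R : ℝ), 0 < R → ball x R ≠ univ →
    (ball x (γ * R) \ ball x R).Nonempty

/-- A family of points `x (k, n)` (for `(k, n) ∈ I`, where `(k, n) ∈ I` represents
`ω = (k,n) ∈ Ω_k`) is a *net system with parameters `(c*, C*, r)`*: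
(c) points on level `k` are `c* r^k`-separated, and
(C) every point of `X` is within distance `< C* r^k` of some level-`k` point. -/
structure IsNetSystem {X : Type*} [PseudoMetricSpace X] (cstar Cstar r : ℝ)
    (I : Set (ℤ × ℕ)) (x : ℤ × ℕ → X) : Prop where
  separated : ∀ (k : ℤ) (n m : ℕ), (k, n) ∈ I → (k, m) ∈ I → n ≠ m →
    cstar * r ^ k ≤ dist (x (k, n)) (x (k, m))
  covering : ∀ (y : X) (k : ℤ), ∃ n : ℕ, (k, n) ∈ I ∧ dist y (x (k, n)) < Cstar * r ^ k

/-- The conditions (T1)–(T5) for a map `π : Ω → Ω` relative to a net system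
`(I, x)` with parameters `(c*, C*, r)` and constants `α₁, α₂, α₃`. -/
structure SatisfiesT {X : Type*} [PseudoMetricSpace X] (Cstar r α₁ α₂ α₃ : ℝ)
    (I : Set (ℤ × ℕ)) (x : ℤ × ℕ → X) (π : ℤ × ℕ → ℤ × ℕ) : Prop where
  /-- `π` maps level `k+1` into level `k` (part of (T1)). -/
  maps_into : ∀ (k : ℤ) (m : ℕ), (k + 1, m) ∈ I →
    π (k + 1, m) ∈ I ∧ (π (k + 1, m)).1 = k
  /-- `π(Ω_{k+1}) = Ω_k` (part of (T1)). -/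
  surj : ∀ (k : ℤ) (n : ℕ), (k, n) ∈ I →
    ∃ m : ℕ, (k + 1, m) ∈ I ∧ π (k + 1, m) = (k, n)
  /-- `sup_ω #π⁻¹(ω) < ∞` (part of (T1)). -/
  fiber_bound : ∃ B : ℕ, ∀ ω : ℤ × ℕ,
    {lam | lam ∈ I ∧ π lam = ω}.Finite ∧ {lam | lam ∈ I ∧ π lam = ω}.ncard ≤ B
  /-- (T2) -/
  T2 : ∀ (k : ℤ) (m : ℕ), (k + 1, m) ∈ I →
    dist (x (k + 1, m)) (x (π (k + 1, m))) < α₁ * r ^ k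
  /-- (T3) -/
  T3 : ∀ (k : ℤ) (n m : ℕ), (k, n) ∈ I → (k + 1, m) ∈ I →
    dist (x (k, n)) (x (k + 1, m)) < α₂ * r ^ k → π (k + 1, m) = (k, n)
  /-- (T4) -/
  T4 : ∀ (k : ℤ) (n₁ n₂ : ℕ), (k, n₁) ∈ I → (k, n₂) ∈ I →
    (ball (x (k, n₁)) (α₃ * r ^ k) ∩ ball (x (k, n₂)) (α₃ * r ^ k)).Nonempty →
    ∃ m₁ m₂ : ℕ, (k + 1, m₁) ∈ I ∧ (k + 1, m₂) ∈ I ∧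
      (ball (x (k + 1, m₁)) (α₃ * r ^ (k + 1)) ∩
        ball (x (k + 1, m₂)) (α₃ * r ^ (k + 1))).Nonempty ∧
      π (k + 1, m₁) = (k, n₁) ∧ π (k + 1, m₂) = (k, n₂)
  /-- (T5) -/
  T5 : ∀ (k : ℤ) (m₁ n : ℕ), (k + 1, m₁) ∈ I → (k, n) ∈ I →
    Cstar * r ^ k ≤ dist (x (k + 1, m₁)) (x (π (k + 1, m₁))) →
    dist (x (k + 1, m₁)) (x (k, n)) < α₃ * r ^ k →
    ∃ m₂ m₃ : ℕ, (k + 1, m₂) ∈ I ∧ (k + 1, m₃) ∈ I ∧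
      (ball (x (k + 1, m₂)) (α₃ * r ^ (k + 1)) ∩
        ball (x (k + 1, m₃)) (α₃ * r ^ (k + 1))).Nonempty ∧
      π (k + 1, m₂) = π (k + 1, m₁) ∧ π (k + 1, m₃) = (k, n)

/-- `K_ω`: the closure of `⋃_{l ≥ 0} {x_λ : λ ∈ π^{-l}(ω)}`. -/
def Kset {X : Type*} [PseudoMetricSpace X] (I : Set (ℤ × ℕ)) (x : ℤ × ℕ → X)
    (π : ℤ × ℕ → ℤ × ℕ) (ω : ℤ × ℕ) : Set X :=
  closure (⋃ l : ℕ, x '' {lam | lam ∈ I ∧ π^[l] lam = ω})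

/-- Lemma: the open ball of radius `α₅ r^k` around `x_{k,n}` is contained in
`K_{k,n}`, where `α₅ = α₂ - α₁ r₀/(1-r₀)`. -/
theorem ball_subset_Kset
    {X : Type*} [MetricSpace X] [CompleteSpace X]
    (hD : Doubling X) (hUP : UniformlyPerfect X)
    (cstar Cstar α₁ α₂ α₃ r₀ r : ℝ) (hc : 0 < cstar) (hcC : cstar < Cstar)
    (hα₁ : 0 < α₁) (hα₂ : 0 < α₂) (hα₃ : 0 < α₃)
    (hr₀0 : 0 < r₀) (hr₀1 : r₀ < 1)
    (hcond : r₀ / (1 - r₀) * α₁ < min α₂ (α₃ - Cstar))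
    (hr0 : 0 < r) (hrr₀ : r ≤ r₀)
    (I : Set (ℤ × ℕ)) (x : ℤ × ℕ → X) (hnet : IsNetSystem cstar Cstar r I x)
    (π : ℤ × ℕ → ℤ × ℕ) (hπ : SatisfiesT Cstar r α₁ α₂ α₃ I x π)
    :
    ∀ (k : ℤ) (n : ℕ), (k, n) ∈ I →
      ball (x (k, n)) ((α₂ - α₁ * r₀ / (1 - r₀)) * r ^ k) ⊆ Kset I x π (k, n) := by
  intro k n hkn y hy
  rw [mem_ball, dist_comm] at hy
  have hr1 : r < 1 := lt_of_le_of_lt hrr₀ hr₀1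
  have h1r : (0:ℝ) < 1 - r := by linarith
  have h1r₀ : (0:ℝ) < 1 - r₀ := by linarith
  have hC : 0 < Cstar := lt_trans hc hcC
  have hrk : (0:ℝ) < r ^ k := zpow_pos hr0 k
  -- chain lemma
  have chain : ∀ (K : ℤ) (ω : ℤ × ℕ), ω ∈ I → ω.1 = K → ∀ j : ℕ,
      π^[j] ω ∈ I ∧ (π^[j] ω).1 = K - j ∧
      dist (x (π^[j] ω)) (x ω) ≤ α₁ * r ^ (K - (j:ℤ)) / (1 - r) := by
    intro K ω hω hωK j
    induction j with
    | zero =>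
      refine ⟨hω, by simpa using hωK, ?_⟩
      simp only [Function.iterate_zero, id_eq, dist_self]
      positivity
    | succ j ih =>
      obtain ⟨h1, h2, h3⟩ := ih
      have heq : (K - (j:ℤ) - 1 + 1, (π^[j] ω).2) = π^[j] ω := by
        apply Prod.ext
        · simp [h2]
        · rfl
      have hmem : (K - (j:ℤ) - 1 + 1, (π^[j] ω).2) ∈ I := by rw [heq]; exact h1
      obtain ⟨hI', hlev'⟩ := hπ.maps_into (K - (j:ℤ) - 1) (π^[j] ω).2 hmem
      have hT2 := hπ.T2 (K - (j:ℤ) - 1) (π^[j] ω).2 hmem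
      rw [heq] at hI' hlev' hT2
      have hit : π^[j+1] ω = π (π^[j] ω) := Function.iterate_succ_apply' π j ω
      refine ⟨by rw [hit]; exact hI', by rw [hit, hlev']; push_cast; ring, ?_⟩
      have htri : dist (x (π^[j+1] ω)) (x ω) ≤
          dist (x (π^[j+1] ω)) (x (π^[j] ω)) + dist (x (π^[j] ω)) (x ω) :=
        dist_triangle _ _ _
      have hd1 : dist (x (π^[j+1] ω)) (x (π^[j] ω)) < α₁ * r ^ (K - (j:ℤ) - 1) := by
        rw [hit, dist_comm]; exact hT2
      have hz : (r:ℝ) ^ (K - (j:ℤ)) = r ^ (K - (j:ℤ) - 1) * r := by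
        rw [← zpow_add_one₀ hr0.ne']; congr 1; ring
      have hzc : K - ((j:ℤ) + 1) = K - (j:ℤ) - 1 := by ring
      have hpos : (0:ℝ) < r ^ (K - (j:ℤ) - 1) := zpow_pos hr0 _
      have hkey : α₁ * r ^ (K - (j:ℤ) - 1) + α₁ * r ^ (K - (j:ℤ)) / (1 - r)
          = α₁ * r ^ (K - (j:ℤ) - 1) / (1 - r) := by
        rw [hz]; field_simp; ring
      push_cast
      rw [hzc]
      linarith
  -- main argument
  rw [Kset, Metric.mem_closure_iff]
  intro ε hε
  set α₅ : ℝ := α₂ - α₁ * r₀ / (1 - r₀) with hα₅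
  have hδ : 0 < α₅ * r ^ k - dist y (x (k, n)) := by
    rw [dist_comm y]; linarith
  set δ : ℝ := α₅ * r ^ k - dist y (x (k, n)) with hδdef
  clear_value α₅ δ
  -- choose l
  have hCk : 0 < Cstar * r ^ k := by positivity
  obtain ⟨l₀, hl₀⟩ := exists_pow_lt_of_lt_one (show 0 < min δ ε / (Cstar * r ^ k) by
    positivity) hr1
  set l : ℕ := l₀ + 1 with hl
  have hrl : r ^ l ≤ r ^ l₀ := by
    apply pow_le_pow_of_le_one hr0.le hr1.le; omega
  have h5 : (r:ℝ) ^ l < min δ ε / (Cstar * r ^ k) := lt_of_le_of_lt hrl hl₀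
  have hsmall : Cstar * r ^ k * r ^ l < min δ ε := by
    rw [lt_div_iff₀ hCk] at h5
    calc Cstar * r ^ k * r ^ l = r ^ l * (Cstar * r ^ k) := by ring
      _ < min δ ε := h5
  have hzl : (r:ℝ) ^ (k + (l:ℤ)) = r ^ k * r ^ l := by
    rw [zpow_add₀ hr0.ne', zpow_natCast]
  -- covering point at level k + l
  obtain ⟨m, hmI, hmd⟩ := hnet.covering y (k + (l:ℤ))
  set ω : ℤ × ℕ := (k + (l:ℤ), m) with hω
  have hdyω : dist y (x ω) < Cstar * r ^ k * r ^ l := by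
    rw [show Cstar * r ^ k * r ^ l = Cstar * (r ^ k * r ^ l) by ring, ← hzl]; exact hmd
  -- chain down to level k+1
  obtain ⟨hlamI, hlamlev, hlamd⟩ := chain (k + (l:ℤ)) ω hmI rfl (l - 1)
  set lam : ℤ × ℕ := π^[l - 1] ω with hlam
  have hl1 : ((l - 1 : ℕ) : ℤ) = (l:ℤ) - 1 := by push_cast [hl]; ring
  have hlamlev' : lam.1 = k + 1 := by rw [hlamlev, hl1]; ring
  have hlameq : (k + 1, lam.2) = lam := by
    apply Prod.ext
    · simp [hlamlev']
    · rfl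
  -- bound on chain distance
  have hrr : r / (1 - r) ≤ r₀ / (1 - r₀) := by
    rw [div_le_div_iff₀ h1r h1r₀]; nlinarith
  have hchainb : dist (x lam) (x ω) ≤ α₁ * r₀ / (1 - r₀) * r ^ k := by
    have h1 : α₁ * r ^ (k + (l:ℤ) - ((l-1:ℕ):ℤ)) / (1 - r) = α₁ * (r ^ k * r) / (1 - r) := by
      rw [hl1, show k + (l:ℤ) - ((l:ℤ) - 1) = k + 1 by ring, zpow_add_one₀ hr0.ne']
    have h2 : α₁ * (r ^ k * r) / (1 - r) ≤ α₁ * r₀ / (1 - r₀) * r ^ k := by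
      have := mul_le_mul_of_nonneg_left hrr (by positivity : (0:ℝ) ≤ α₁ * r ^ k)
      calc α₁ * (r ^ k * r) / (1 - r) = α₁ * r ^ k * (r / (1 - r)) := by ring
        _ ≤ α₁ * r ^ k * (r₀ / (1 - r₀)) := this
        _ = α₁ * r₀ / (1 - r₀) * r ^ k := by ring
    calc dist (x lam) (x ω) ≤ α₁ * r ^ (k + (l:ℤ) - ((l-1:ℕ):ℤ)) / (1 - r) := hlamd
      _ ≤ α₁ * r₀ / (1 - r₀) * r ^ k := by rw [h1]; exact h2
  -- T3 at the bottom step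
  have hdist : dist (x (k, n)) (x (k + 1, lam.2)) < α₂ * r ^ k := by
    rw [hlameq]
    have htri : dist (x (k, n)) (x lam) ≤
        dist (x (k, n)) y + dist y (x ω) + dist (x ω) (x lam) := by
      have := dist_triangle (x (k, n)) y (x lam)
      have := dist_triangle y (x ω) (x lam)
      linarith
    have h1 : dist (x (k, n)) y = α₅ * r ^ k - δ := by rw [dist_comm]; simp [hδdef]
    have h2 : dist (x ω) (x lam) = dist (x lam) (x ω) := dist_comm _ _
    have h3 : Cstar * r ^ k * r ^ l < δ := lt_of_lt_of_le hsmall (min_le_left _ _)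
    have h4 : α₅ * r ^ k + α₁ * r₀ / (1 - r₀) * r ^ k = α₂ * r ^ k := by
      rw [hα₅]; ring
    linarith
  have hT3 := hπ.T3 k n lam.2 hkn (by rw [hlameq]; exact hlamI) hdist
  have hπl : π^[l] ω = (k, n) := by
    have : l = (l - 1) + 1 := by omega
    rw [this, Function.iterate_succ_apply', ← hlam, ← hlameq, hT3]
  -- conclude
  refine ⟨x ω, ?_, ?_⟩
  · exact mem_iUnion.mpr ⟨l, mem_image_of_mem x ⟨hmI, hπl⟩⟩
  · exact lt_of_lt_of_le hdyω (le_of_lt (lt_of_lt_of_le hsmall (min_le_right _ _)))
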